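/- arXiv:1410.6774 — 5 statements merged into one kernel-verified Lean document; each statement's English description precedes it below -/
import Mathlib

section
/- Every n-dimensional normed space M over ℂ (n ≥ 1) admits an Auerbach basis: there exist vectors e_1, …, e_n forming a basis of M such that for all scalars λ_1, …, λ_n ∈ ℂ one has max_i |λ_i| ≤ ‖∑_{i=1}^n λ_i e_i‖ ≤ ∑_{i=1}^n |λ_i|. -/
/-- Every `n`-dimensional normed space `M` over `ℂ` (`n ≥ 1`) admits an Auerbach basis:
a basis `e : Fin n → M` such that for all scalars `c : Fin n → ℂ`,
`max_i ‖c i‖ ≤ ‖∑ i, c i • e i‖ ≤ ∑ i, ‖c i‖`. -/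
theorem auerbach_basis_exists (M : Type*) [NormedAddCommGroup M] [NormedSpace ℂ M]
    [FiniteDimensional ℂ M] (n : ℕ) (hn : 1 ≤ n) (hdim : Module.finrank ℂ M = n) :
    ∃ e : Module.Basis (Fin n) ℂ M, ∀ c : Fin n → ℂ,
      (∀ i, ‖c i‖ ≤ ‖∑ i, c i • e i‖) ∧ ‖∑ i, c i • e i‖ ≤ ∑ i, ‖c i‖ := by
  classical
  have hnt : Nontrivial M := by
    have : 0 < Module.finrank ℂ M := by omega
    exact Module.nontrivial_of_finrank_pos this
  let b : Module.Basis (Fin n) ℂ M := Module.finBasisOfFinrankEq ℂ M hdim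
  -- the determinant function
  let f : (Fin n → M) → ℝ := fun v => ‖b.det v‖
  have hdetc : Continuous fun v : Fin n → M => b.det v := by
    have heq : (fun v : Fin n → M => b.det v)
        = fun v => Matrix.det (Matrix.of fun i j => b.repr (v j) i) := by
      ext v; rw [Module.Basis.det_apply]; rfl
    rw [heq]
    exact Continuous.matrix_det (continuous_matrix fun i j =>
      ((b.coord i).continuous_of_finiteDimensional).comp (continuous_apply j))
  have hf : Continuous f := hdetc.norm
  -- the compact set
  let S : Set (Fin n → M) := Set.pi Set.univ fun _ => Metric.closedBall (0 : M) 1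
  have hS : IsCompact S := isCompact_univ_pi fun _ => isCompact_closedBall 0 1
  -- a point with nonzero determinant
  let v0 : Fin n → M := fun i => ((‖b i‖⁻¹ : ℝ) : ℂ) • b i
  have hb0 : ∀ i, b i ≠ 0 := fun i => b.ne_zero i
  have hv0S : v0 ∈ S := by
    intro i _
    simp only [v0, Metric.mem_closedBall, dist_zero_right, norm_smul, Complex.norm_real,
      norm_inv, norm_norm]
    rw [inv_mul_cancel₀ (norm_ne_zero_iff.mpr (hb0 i))]
  have hfv0 : 0 < f v0 := by
    have : b.det v0 = (∏ i, (‖b i‖⁻¹ : ℂ)) • b.det b := by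
      have := (b.det : M [⋀^Fin n]→ₗ[ℂ] ℂ).map_smul_univ
        (fun i => ((‖b i‖⁻¹ : ℝ) : ℂ)) b
      simpa [v0] using this
    have hne : b.det v0 ≠ 0 := by
      rw [this, b.det_self]
      simp only [smul_eq_mul, mul_one]
      exact Finset.prod_ne_zero_iff.mpr fun i _ => by
        simp [norm_ne_zero_iff.mpr (hb0 i)]
    simpa [f] using norm_pos_iff.mpr hne
  -- maximize
  obtain ⟨v, hvS, hmax⟩ := hS.exists_isMaxOn ⟨v0, hv0S⟩ hf.continuousOn
  have hfv : 0 < f v := lt_of_lt_of_le hfv0 (hmax hv0S)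
  have hdet : b.det v ≠ 0 := norm_pos_iff.mp hfv
  obtain ⟨hli, hspan⟩ := (Module.Basis.is_basis_iff_det b).mpr (isUnit_iff_ne_zero.mpr hdet)
  let e : Module.Basis (Fin n) ℂ M := Module.Basis.mk hli hspan.ge
  have hev : ⇑e = v := Module.Basis.coe_mk hli hspan.ge
  have hnormv : ∀ i, ‖v i‖ ≤ 1 := by
    intro i
    have := hvS i (Set.mem_univ i)
    simpa using this
  -- key determinant identity
  have hkey : ∀ (x : M) (i : Fin n),
      b.det (Function.update v i x) = e.repr x i * b.det v := by
    intro x i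
    conv_lhs => rw [← e.sum_repr x]
    rw [show (∑ j, e.repr x j • e j) = ∑ j, e.repr x j • v j by rw [hev]]
    rw [(b.det : M [⋀^Fin n]→ₗ[ℂ] ℂ).map_update_sum Finset.univ i
      (fun j => e.repr x j • v j) v]
    rw [Finset.sum_eq_single i]
    · rw [(b.det : M [⋀^Fin n]→ₗ[ℂ] ℂ).map_update_smul, Function.update_eq_self]
      simp
    · intro j _ hj
      rw [(b.det : M [⋀^Fin n]→ₗ[ℂ] ℂ).map_update_smul]
      have : b.det (Function.update v i (v j)) = 0 := by
        refine AlternatingMap.map_eq_zero_of_eq _ _ (i := i) (j := j) ?_ (Ne.symm hj)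
        rw [Function.update_self, Function.update_of_ne hj]
      simp [this]
    · simp
  -- coordinate functionals bounded by 1 on the unit ball
  have hcoord1 : ∀ (x : M), ‖x‖ ≤ 1 → ∀ i, ‖e.repr x i‖ ≤ 1 := by
    intro x hx i
    have hmem : Function.update v i x ∈ S := by
      intro j _
      rcases eq_or_ne j i with rfl | hji
      · simpa using hx
      · rw [Function.update_of_ne hji]
        simpa using hnormv j
    have h5 : ‖b.det (Function.update v i x)‖ ≤ ‖b.det v‖ := hmax hmem
    rw [hkey, norm_mul] at h5
    have h6 : ‖e.repr x i‖ * ‖b.det v‖ ≤ 1 * ‖b.det v‖ := by rw [one_mul]; exact h5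
    exact le_of_mul_le_mul_right h6 hfv
  have hcoord : ∀ (x : M) (i : Fin n), ‖e.repr x i‖ ≤ ‖x‖ := by
    intro x i
    rcases eq_or_ne x 0 with rfl | hx
    · simp
    · have hxn : (0:ℝ) < ‖x‖ := norm_pos_iff.mpr hx
      have h1 : ‖(‖x‖⁻¹ : ℝ) • x‖ ≤ 1 := by
        rw [norm_smul, norm_inv, norm_norm, inv_mul_cancel₀ hxn.ne']
      have h2 := hcoord1 _ h1 i
      have h3 : e.repr ((‖x‖⁻¹ : ℝ) • x) i = (‖x‖⁻¹ : ℂ) * e.repr x i := by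
        rw [show ((‖x‖⁻¹ : ℝ) • x) = ((‖x‖⁻¹ : ℝ) : ℂ) • x from (Complex.coe_smul _ _).symm]
        simp
      rw [h3, norm_mul, norm_inv, Complex.norm_real, norm_norm] at h2
      calc ‖e.repr x i‖ = ‖x‖ * (‖x‖⁻¹ * ‖e.repr x i‖) := by field_simp
        _ ≤ ‖x‖ * 1 := by exact mul_le_mul_of_nonneg_left h2 hxn.le
        _ = ‖x‖ := mul_one _
  refine ⟨e, fun c => ⟨fun i => ?_, ?_⟩⟩
  · have : e.repr (∑ i, c i • e i) = c := by
      ext j; rw [e.repr_sum_self]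
    have h := hcoord (∑ i, c i • e i) i
    rw [this] at h
    exact h
  · calc ‖∑ i, c i • e i‖ ≤ ∑ i, ‖c i • e i‖ := norm_sum_le _ _
      _ ≤ ∑ i, ‖c i‖ := by
          apply Finset.sum_le_sum
          intro i _
          rw [norm_smul]
          have : ‖e i‖ ≤ 1 := by rw [hev]; exact hnormv i
          nlinarith [norm_nonneg (c i)]
end

section
/- Let E be a normed space over ℂ and let N ⊆ E be a subspace of finite dimension n ≥ 1. Then there exists a continuous linear map P : E → E such that P(E) ⊆ N, P x = x for every x ∈ N (so P is a projection of E onto N), and ‖P‖ ≤ n. -/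
/-- If `N` is an `n`-dimensional subspace (`n ≥ 1`) of a normed space `E` over `ℂ`, then
there is a continuous linear projection `P : E → E` onto `N` with `‖P‖ ≤ n`. -/
theorem exists_projection_norm_le_dim (E : Type*) [NormedAddCommGroup E] [NormedSpace ℂ E]
    (N : Submodule ℂ E) [FiniteDimensional ℂ N] (n : ℕ) (hn : 1 ≤ n)
    (hdim : Module.finrank ℂ N = n) :
    ∃ P : E →L[ℂ] E, (∀ x : E, P x ∈ N) ∧ (∀ x ∈ N, P x = x) ∧ ‖P‖ ≤ (n : ℝ) := by
  classical
  let b0 : Module.Basis (Fin n) ℂ N := Module.finBasisOfFinrankEq ℂ N hdim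
  -- continuity of the determinant function
  have hfc : Continuous fun v : Fin n → N => b0.det v := by
    have hrw : (fun v : Fin n → N => b0.det v)
        = fun v => Matrix.det (Matrix.of fun i j => b0.repr (v j) i) := by
      funext v
      rw [Module.Basis.det_apply]
      rfl
    rw [hrw]
    exact Continuous.matrix_det (continuous_pi fun i => continuous_pi fun j =>
      ((b0.coord i).toContinuousLinearMap.continuous.comp (continuous_apply j)))
  have hnc : Continuous fun v : Fin n → N => ‖b0.det v‖ := hfc.norm
  -- the compact set of unit-norm families
  set S : Set (Fin n → N) := Set.univ.pi fun _ => Metric.sphere (0 : N) 1 with hS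
  have hScomp : IsCompact S := isCompact_univ_pi fun _ => isCompact_sphere 0 1
  have hb0ne : ∀ i, (b0 i : N) ≠ 0 := fun i => b0.ne_zero i
  have hmem : (fun i => ((‖b0 i‖ : ℂ)⁻¹ : ℂ) • b0 i) ∈ S := by
    intro i _
    have h : ‖b0 i‖ ≠ 0 := norm_ne_zero_iff.mpr (hb0ne i)
    have : ‖((‖b0 i‖ : ℂ)⁻¹ : ℂ) • b0 i‖ = 1 := by
      rw [norm_smul, norm_inv, Complex.norm_real, norm_norm, inv_mul_cancel₀ h]
    simpa using this
  have hSne : S.Nonempty := ⟨_, hmem⟩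
  obtain ⟨v, hvS, hmax⟩ := hScomp.exists_isMaxOn hSne hnc.continuousOn
  have hv1 : ∀ i, ‖v i‖ = 1 := fun i => by
    have := hvS i (Set.mem_univ i); simpa using this
  -- the maximum is positive
  have hpos : 0 < ‖b0.det v‖ := by
    have h1 : b0.det (fun i => ((‖b0 i‖ : ℂ)⁻¹ : ℂ) • b0 i)
        = (∏ i, ((‖b0 i‖ : ℂ)⁻¹ : ℂ)) • b0.det b0 := by
      exact b0.det.toMultilinearMap.map_smul_univ _ _
    have h2 : b0.det (fun i => ((‖b0 i‖ : ℂ)⁻¹ : ℂ) • b0 i) ≠ 0 := by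
      rw [h1, b0.det_self, smul_eq_mul, mul_one]
      refine Finset.prod_ne_zero_iff.mpr fun i _ => ?_
      exact inv_ne_zero (by exact_mod_cast norm_ne_zero_iff.mpr (hb0ne i))
    have h3 : 0 < ‖b0.det (fun i => ((‖b0 i‖ : ℂ)⁻¹ : ℂ) • b0 i)‖ := norm_pos_iff.mpr h2
    exact lt_of_lt_of_le h3 (hmax hmem)
  have hvne : b0.det v ≠ 0 := norm_pos_iff.mp hpos
  -- v is a basis
  obtain ⟨hli, hsp⟩ := (Module.Basis.is_basis_iff_det b0).mpr (isUnit_iff_ne_zero.mpr hvne)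
  let b : Module.Basis (Fin n) ℂ N := Module.Basis.mk hli hsp.ge
  have hbv : ∀ i, b i = v i := fun i => Module.Basis.mk_apply hli hsp.ge i
  -- coordinate functionals of b have norm ≤ 1
  have hcoord : ∀ i (y : N), ‖b.coord i y‖ ≤ ‖y‖ := by
    intro i y
    have key : ∀ u : N, ‖u‖ = 1 → ‖b.coord i u‖ ≤ 1 := by
      intro u hu
      have hupd : Function.update v i u ∈ S := by
        intro j _
        rcases eq_or_ne j i with rfl | hj
        · simpa [Function.update_self] using hu
        · simp [Function.update_of_ne hj, hv1 j]
      have hle : ‖b0.det (Function.update v i u)‖ ≤ ‖b0.det v‖ := hmax hupd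
      have heq : b0.det v * b.coord i u = b0.det (Function.update v i u) := by
        have h := congrArg (fun f : N →ₗ[ℂ] ℂ => f u)
          (Module.Basis.det_smul_mk_coord_eq_det_update (e := b0) hli hsp.ge i)
        simp only [LinearMap.smul_apply, smul_eq_mul,
          MultilinearMap.toLinearMap_apply] at h
        exact h
      have : ‖b0.det v‖ * ‖b.coord i u‖ ≤ ‖b0.det v‖ * 1 := by
        rw [← norm_mul, heq, mul_one]; exact hle
      exact le_of_mul_le_mul_left this hpos
    rcases eq_or_ne y 0 with rfl | hy
    · simp
    · have h : ‖y‖ ≠ 0 := norm_ne_zero_iff.mpr hy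
      have hu : ‖((‖y‖ : ℂ)⁻¹ : ℂ) • y‖ = 1 := by
        rw [norm_smul, norm_inv, Complex.norm_real, norm_norm]
        exact inv_mul_cancel₀ h
      have := key _ hu
      rw [map_smul, norm_smul] at this
      simp only [norm_inv, Complex.norm_real, norm_norm] at this
      calc ‖b.coord i y‖ = ‖y‖ * (‖y‖⁻¹ * ‖b.coord i y‖) := by
            rw [← mul_assoc, mul_inv_cancel₀ h, one_mul]
        _ ≤ ‖y‖ * 1 := mul_le_mul_of_nonneg_left this (norm_nonneg y)
        _ = ‖y‖ := mul_one _
  -- extend coordinate functionals to E by Hahn-Banach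
  have hext : ∀ i, ∃ g : E →L[ℂ] ℂ, (∀ x : N, g x = b.coord i x) ∧ ‖g‖ ≤ 1 := by
    intro i
    let c : N →L[ℂ] ℂ := (b.coord i).toContinuousLinearMap
    obtain ⟨g, hg, hgn⟩ := exists_extension_norm_eq N c
    refine ⟨g, fun x => hg x, ?_⟩
    rw [hgn]
    exact ContinuousLinearMap.opNorm_le_bound c zero_le_one (fun y => by
      simpa [c] using hcoord i y)
  choose g hg hgn using hext
  -- the projection
  let P : E →L[ℂ] E := ∑ i, (g i).smulRight (b i : E)
  have hPapply : ∀ x : E, P x = ∑ i, g i x • (b i : E) := fun x => by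
    simp [P, ContinuousLinearMap.sum_apply]
  refine ⟨P, ?_, ?_, ?_⟩
  · intro x
    rw [hPapply]
    exact Submodule.sum_mem N fun i _ => Submodule.smul_mem N _ (b i).2
  · intro x hx
    rw [hPapply]
    have : ∑ i, g i x • (b i : E) = ((∑ i, b.coord i ⟨x, hx⟩ • b i : N) : E) := by
      push_cast
      exact Finset.sum_congr rfl fun i _ => by rw [hg i ⟨x, hx⟩]
    rw [this]
    have : (∑ i, b.coord i ⟨x, hx⟩ • b i : N) = ⟨x, hx⟩ := by
      simpa [Module.Basis.coord_apply] using b.sum_repr ⟨x, hx⟩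
    rw [this]
  · refine ContinuousLinearMap.opNorm_le_bound P (by positivity) fun x => ?_
    rw [hPapply]
    calc ‖∑ i, g i x • (b i : E)‖ ≤ ∑ i, ‖g i x • (b i : E)‖ := norm_sum_le _ _
      _ ≤ ∑ _i : Fin n, ‖x‖ := by
          refine Finset.sum_le_sum fun i _ => ?_
          rw [norm_smul]
          have hbi : ‖(b i : E)‖ = 1 := by
            have h1 : ‖b i‖ = 1 := by rw [hbv i]; exact hv1 i
            exact h1
          rw [hbi, mul_one]
          calc ‖g i x‖ ≤ ‖g i‖ * ‖x‖ := (g i).le_opNorm x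
            _ ≤ 1 * ‖x‖ := mul_le_mul_of_nonneg_right (hgn i) (norm_nonneg x)
            _ = ‖x‖ := one_mul _
      _ = n * ‖x‖ := by simp [Finset.sum_const, mul_comm]
end

section
/- Let E be a normed space over ℂ, let M ⊆ E be an n-dimensional subspace with an Auerbach basis (e_1, …, e_n). Let T : E → E be a continuous linear map and μ ≥ 0 with ‖T e_i − e_i‖ ≤ μ for all i, and assume nμ < 1. Then the restriction T|_M : M → T(M) is a linear bijection onto T(M), and its inverse V : T(M) → M satisfies ‖V y‖ ≤ (1/(1 − nμ)) ‖y‖ for all y ∈ T(M). -/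
/-- If `M ⊆ E` is an `n`-dimensional subspace with an Auerbach basis `e₁, …, eₙ`,
`T : E → E` is bounded linear, `μ ≥ 0` satisfies `‖T eᵢ - eᵢ‖ ≤ μ` for all `i` and
`n μ < 1`, then `T` restricted to `M` is a bijection onto `T(M)` and its inverse
`V : T(M) → M` satisfies `‖V y‖ ≤ (1/(1 - n μ)) ‖y‖` for all `y ∈ T(M)`
(equivalently `‖x‖ ≤ (1/(1 - n μ)) ‖T x‖` for all `x ∈ M`). -/
theorem restriction_invertible_of_perturb_auerbach (E : Type*) [NormedAddCommGroup E]
    [NormedSpace ℂ E] (n : ℕ) (M : Submodule ℂ E) (e : Fin n → E)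
    (he : ∀ i, e i ∈ M)
    (hspan : M = Submodule.span ℂ (Set.range e))
    (hAuer : ∀ c : Fin n → ℂ,
      (∀ i, ‖c i‖ ≤ ‖∑ i, c i • e i‖) ∧ ‖∑ i, c i • e i‖ ≤ ∑ i, ‖c i‖)
    (T : E →L[ℂ] E) (μ : ℝ) (hμ : 0 ≤ μ)
    (hTe : ∀ i, ‖T (e i) - e i‖ ≤ μ) (hμn : (n : ℝ) * μ < 1) :
    Set.BijOn (T : E → E) (M : Set E) ((T : E → E) '' (M : Set E)) ∧
      ∀ x ∈ M, ‖x‖ ≤ (1 / (1 - n * μ)) * ‖T x‖ := by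
  have hpos : (0:ℝ) < 1 - (n:ℝ) * μ := by linarith
  have key : ∀ x ∈ M, (1 - (n:ℝ) * μ) * ‖x‖ ≤ ‖T x‖ := by
    intro x hx
    rw [hspan] at hx
    obtain ⟨c, rfl⟩ := (Submodule.mem_span_range_iff_exists_fun ℂ).mp hx
    obtain ⟨hle, _⟩ := hAuer c
    set x := ∑ i, c i • e i with hxdef
    have h1 : ‖T x - x‖ ≤ (n:ℝ) * μ * ‖x‖ := by
      have hrw : T x - x = ∑ i, c i • (T (e i) - e i) := by
        simp [hxdef, map_sum, smul_sub, Finset.sum_sub_distrib]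
      rw [hrw]
      calc ‖∑ i, c i • (T (e i) - e i)‖ ≤ ∑ i, ‖c i • (T (e i) - e i)‖ :=
            norm_sum_le _ _
        _ ≤ ∑ _i : Fin n, ‖x‖ * μ := by
            apply Finset.sum_le_sum
            intro i _
            rw [norm_smul]
            exact mul_le_mul (hle i) (hTe i) (norm_nonneg _) (norm_nonneg _)
        _ = (n:ℝ) * μ * ‖x‖ := by
            rw [Finset.sum_const, Finset.card_univ, Fintype.card_fin]
            ring
    have h2 : ‖x‖ - ‖T x‖ ≤ ‖T x - x‖ := by
      have := norm_sub_norm_le x (T x)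
      rw [norm_sub_rev] at this
      linarith
    nlinarith
  have hinj : Set.InjOn (T : E → E) (M : Set E) := by
    intro x hx y hy hxy
    have hmem : x - y ∈ M := M.sub_mem hx hy
    have := key (x - y) hmem
    have hz : T (x - y) = 0 := by simp [map_sub, hxy]
    rw [hz, norm_zero] at this
    have : ‖x - y‖ ≤ 0 := by nlinarith [norm_nonneg (x - y)]
    have : x - y = 0 := by
      rwa [← norm_le_zero_iff]
    exact sub_eq_zero.mp this
  refine ⟨hinj.bijOn_image, ?_⟩
  intro x hx
  rw [div_mul_eq_mul_div, one_mul, le_div_iff₀ hpos]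
  have := key x hx
  linarith [key x hx, mul_comm ‖x‖ (1 - (n:ℝ)*μ)]
end

section
/- Let E be a normed space over ℂ, let M ⊆ E be an n-dimensional subspace with an Auerbach basis (e_1, …, e_n). Let T : E → E be a continuous linear map and μ ≥ 0 with ‖T e_i − e_i‖ ≤ μ for all i, and assume nμ < 1. Then for every x ∈ M one has ‖x − T x‖ ≤ (nμ/(1 − nμ)) ‖T x‖. Equivalently, writing V : T(M) → M for the inverse of T|_M and J : T(M) → E for the inclusion, the operator V − J : T(M) → E has norm at most nμ/(1 − nμ). -/
/-- If `M ⊆ E` is an `n`-dimensional subspace with an Auerbach basis `e₁, …, eₙ`,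
`T : E → E` is bounded linear, `μ ≥ 0` satisfies `‖T eᵢ - eᵢ‖ ≤ μ` for all `i` and
`n μ < 1`, then for every `x ∈ M` one has `‖x - T x‖ ≤ (n μ/(1 - n μ)) ‖T x‖`;
i.e. the operator `V - J : T(M) → E` has norm at most `n μ/(1 - n μ)`. -/
theorem norm_sub_apply_le_of_perturb_auerbach (E : Type*) [NormedAddCommGroup E]
    [NormedSpace ℂ E] (n : ℕ) (M : Submodule ℂ E) (e : Fin n → E)
    (he : ∀ i, e i ∈ M)
    (hspan : M = Submodule.span ℂ (Set.range e))
    (hAuer : ∀ c : Fin n → ℂ,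
      (∀ i, ‖c i‖ ≤ ‖∑ i, c i • e i‖) ∧ ‖∑ i, c i • e i‖ ≤ ∑ i, ‖c i‖)
    (T : E →L[ℂ] E) (μ : ℝ) (hμ : 0 ≤ μ)
    (hTe : ∀ i, ‖T (e i) - e i‖ ≤ μ) (hμn : (n : ℝ) * μ < 1) :
    ∀ x ∈ M, ‖x - T x‖ ≤ (n * μ / (1 - n * μ)) * ‖T x‖ := by
  subst hspan
  intro x hx
  rw [Submodule.mem_span_range_iff_exists_fun] at hx
  obtain ⟨c, hc⟩ := hx
  have hci : ∀ i, ‖c i‖ ≤ ‖x‖ := fun i => hc ▸ (hAuer c).1 i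
  have key : ‖x - T x‖ ≤ (n * μ) * ‖x‖ := by
    have hrw : x - T x = ∑ i, c i • (e i - T (e i)) := by
      simp only [smul_sub, Finset.sum_sub_distrib, ← map_smul, ← map_sum, hc]
    rw [hrw]
    calc ‖∑ i, c i • (e i - T (e i))‖ ≤ ∑ i, ‖c i • (e i - T (e i))‖ :=
          norm_sum_le _ _
      _ ≤ ∑ _i : Fin n, ‖x‖ * μ := by
          apply Finset.sum_le_sum
          intro i _
          rw [norm_smul]
          have h2 : ‖e i - T (e i)‖ ≤ μ := by rw [norm_sub_rev]; exact hTe i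
          exact mul_le_mul (hci i) h2 (norm_nonneg _) (norm_nonneg x)
      _ = (n * μ) * ‖x‖ := by
          simp [Finset.sum_const, Finset.card_fin]; ring
  have h1 : ‖x‖ ≤ ‖T x‖ + ‖x - T x‖ := by
    calc ‖x‖ = ‖T x + (x - T x)‖ := by rw [add_sub_cancel]
      _ ≤ ‖T x‖ + ‖x - T x‖ := norm_add_le _ _
  have hd : (0:ℝ) < 1 - n * μ := by linarith
  rw [div_mul_eq_mul_div, le_div_iff₀ hd]
  have hnm : (0:ℝ) ≤ (n:ℝ) * μ := mul_nonneg (Nat.cast_nonneg n) hμ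
  nlinarith [mul_le_mul_of_nonneg_left h1 hnm, norm_nonneg (x - T x)]
end

section
/- Let E be a normed space over ℂ, let M ⊆ E be an n-dimensional subspace with an Auerbach basis (e_1, …, e_n). Let T : E → E be a continuous linear map of finite rank and μ ≥ 0 with ‖T e_i − e_i‖ ≤ μ for all i and nμ < 1, so that T|_M : M → T(M) is invertible with inverse V. Let P : E → E be a projection onto T(M) with ‖P‖ ≤ n, and define Q : E → E by Q e = e − P e + V(P e). Then Q is a bounded linear operator with ‖Q‖ ≤ 1 + n²μ/(1 − nμ), the operator F = Q ∘ T satisfies F x = x for every x ∈ M, and rank F ≤ rank T; in particular ‖F‖ ≤ (1 + n²μ/(1 − nμ)) ‖T‖. -/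
/-- Let `M ⊆ E` be an `n`-dimensional subspace with an Auerbach basis `e₁, …, eₙ`, let
`T : E → E` be a bounded finite-rank operator with `‖T eᵢ - eᵢ‖ ≤ μ` for all `i` and
`n μ < 1`, so that `T|_M` is invertible with inverse `V : T(M) → M`.  Let `P : E → E`
be a projection onto `T(M)` with `‖P‖ ≤ n` and define `Q y = y - P y + V (P y)`.
Then `‖Q‖ ≤ 1 + n² μ/(1 - n μ)`, the operator `F = Q ∘ T` restricts to the identity on
`M`, `rank F ≤ rank T`, and `‖F‖ ≤ (1 + n² μ/(1 - n μ)) ‖T‖`. -/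
theorem correction_operator_bounds (E : Type*) [NormedAddCommGroup E] [NormedSpace ℂ E]
    (n : ℕ) (M : Submodule ℂ E) (e : Fin n → E)
    (he : ∀ i, e i ∈ M)
    (hspan : M = Submodule.span ℂ (Set.range e))
    (hAuer : ∀ c : Fin n → ℂ,
      (∀ i, ‖c i‖ ≤ ‖∑ i, c i • e i‖) ∧ ‖∑ i, c i • e i‖ ≤ ∑ i, ‖c i‖)
    (T : E →L[ℂ] E)
    (hT : FiniteDimensional ℂ ↥(LinearMap.range (T : E →ₗ[ℂ] E)))
    (μ : ℝ) (hμ : 0 ≤ μ)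
    (hTe : ∀ i, ‖T (e i) - e i‖ ≤ μ) (hμn : (n : ℝ) * μ < 1)
    (V : E →ₗ[ℂ] E) (hV : ∀ x ∈ M, V (T x) = x)
    (P : E →L[ℂ] E)
    (hPrange : ∀ y : E, P y ∈ M.map (T : E →ₗ[ℂ] E))
    (hPid : ∀ y ∈ M.map (T : E →ₗ[ℂ] E), P y = y)
    (hPnorm : ‖P‖ ≤ (n : ℝ)) :
    (∀ y : E, ‖y - P y + V (P y)‖ ≤ (1 + (n : ℝ) ^ 2 * μ / (1 - n * μ)) * ‖y‖) ∧
      (∀ x ∈ M, T x - P (T x) + V (P (T x)) = x) ∧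
      Module.rank ℂ
          ↥(LinearMap.range
            ((LinearMap.id - (P : E →ₗ[ℂ] E) + V.comp (P : E →ₗ[ℂ] E)).comp
              (T : E →ₗ[ℂ] E))) ≤
        Module.rank ℂ ↥(LinearMap.range (T : E →ₗ[ℂ] E)) ∧
      (∀ y : E, ‖T y - P (T y) + V (P (T y))‖ ≤
        (1 + (n : ℝ) ^ 2 * μ / (1 - n * μ)) * ‖T‖ * ‖y‖) := by
  have h1 : (0:ℝ) < 1 - n * μ := by linarith
  have hnμ : (0:ℝ) ≤ (n:ℝ) * μ := by positivity
  -- key estimate on M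
  have key : ∀ x ∈ M, ‖T x - x‖ ≤ (n:ℝ) * μ * ‖x‖ := by
    intro x hx
    rw [hspan] at hx
    obtain ⟨c, hc⟩ := (Submodule.mem_span_range_iff_exists_fun ℂ).mp hx
    have hx' : T x - x = ∑ i, c i • (T (e i) - e i) := by
      rw [← hc, map_sum]
      simp [smul_sub, Finset.sum_sub_distrib]
    rw [hx']
    calc ‖∑ i, c i • (T (e i) - e i)‖ ≤ ∑ i, ‖c i • (T (e i) - e i)‖ :=
          norm_sum_le _ _
      _ ≤ ∑ i : Fin n, ‖x‖ * μ := by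
          apply Finset.sum_le_sum
          intro i _
          rw [norm_smul]
          have h2 : ‖c i‖ ≤ ‖x‖ := by rw [← hc]; exact (hAuer c).1 i
          exact mul_le_mul h2 (hTe i) (norm_nonneg _) (norm_nonneg _)
      _ = (n:ℝ) * μ * ‖x‖ := by simp [Finset.sum_const]; ring
  -- estimate for V on T(M)
  have keyV : ∀ z ∈ M.map (T : E →ₗ[ℂ] E), ‖z - V z‖ ≤ (n:ℝ) * μ / (1 - n * μ) * ‖z‖ := by
    intro z hz
    obtain ⟨x, hx, rfl⟩ := hz
    have hVz : V (T x) = x := hV x hx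
    have h3 : ‖T x - x‖ ≤ (n:ℝ) * μ * ‖x‖ := key x hx
    have h4 : ‖x‖ ≤ ‖(T:E→ₗ[ℂ]E) x‖ + (n:ℝ) * μ * ‖x‖ := by
      calc ‖x‖ = ‖(T:E→ₗ[ℂ]E) x - (T x - x)‖ := by congr 1; simp
        _ ≤ ‖(T:E→ₗ[ℂ]E) x‖ + ‖T x - x‖ := norm_sub_le _ _
        _ ≤ _ := by simpa using h3
    have h5 : ‖x‖ ≤ ‖(T:E→ₗ[ℂ]E) x‖ / (1 - n*μ) := by
      rw [le_div_iff₀ h1]; nlinarith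
    simp only [ContinuousLinearMap.coe_coe]
    rw [hVz]
    have : ‖(T:E→ₗ[ℂ]E) x - x‖ ≤ (n:ℝ) * μ * ‖x‖ := by simpa using h3
    calc ‖(T:E→ₗ[ℂ]E) x - x‖ ≤ (n:ℝ) * μ * ‖x‖ := this
      _ ≤ (n:ℝ) * μ * (‖(T:E→ₗ[ℂ]E) x‖ / (1 - n*μ)) :=
          mul_le_mul_of_nonneg_left h5 hnμ
      _ = (n:ℝ) * μ / (1 - n*μ) * ‖(T:E→ₗ[ℂ]E) x‖ := by ring
  -- first conclusion
  have hQ : ∀ y : E, ‖y - P y + V (P y)‖ ≤ (1 + (n : ℝ) ^ 2 * μ / (1 - n * μ)) * ‖y‖ := by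
    intro y
    have hz := keyV (P y) (hPrange y)
    have hPy : ‖P y‖ ≤ (n:ℝ) * ‖y‖ :=
      le_trans (P.le_opNorm y) (mul_le_mul_of_nonneg_right hPnorm (norm_nonneg _))
    have e1 : y - P y + V (P y) = y + (V (P y) - P y) := by abel
    rw [e1]
    calc ‖y + (V (P y) - P y)‖ ≤ ‖y‖ + ‖V (P y) - P y‖ := norm_add_le _ _
      _ = ‖y‖ + ‖P y - V (P y)‖ := by rw [norm_sub_rev]
      _ ≤ ‖y‖ + (n:ℝ) * μ / (1 - n*μ) * ‖P y‖ := by linarith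
      _ ≤ ‖y‖ + (n:ℝ) * μ / (1 - n*μ) * ((n:ℝ) * ‖y‖) := by
          have : (0:ℝ) ≤ (n:ℝ) * μ / (1 - n*μ) := by positivity
          nlinarith
      _ = (1 + (n : ℝ) ^ 2 * μ / (1 - n * μ)) * ‖y‖ := by ring
  have hF : ∀ x ∈ M, T x - P (T x) + V (P (T x)) = x := by
    intro x hx
    have hTx : (T:E→ₗ[ℂ]E) x ∈ M.map (T : E →ₗ[ℂ] E) := ⟨x, hx, rfl⟩
    have hPTx : P (T x) = T x := hPid _ hTx
    rw [hPTx, hV x hx]; abel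
  refine ⟨hQ, hF, ?_, ?_⟩
  · exact LinearMap.rank_comp_le_right _ _
  · intro y
    have := hQ (T y)
    have hC : (0:ℝ) ≤ 1 + (n : ℝ) ^ 2 * μ / (1 - n * μ) := by positivity
    calc ‖T y - P (T y) + V (P (T y))‖ ≤ (1 + (n : ℝ) ^ 2 * μ / (1 - n * μ)) * ‖T y‖ := this
      _ ≤ (1 + (n : ℝ) ^ 2 * μ / (1 - n * μ)) * (‖T‖ * ‖y‖) :=
          mul_le_mul_of_nonneg_left (T.le_opNorm y) hC
      _ = (1 + (n : ℝ) ^ 2 * μ / (1 - n * μ)) * ‖T‖ * ‖y‖ := by ring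
end
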